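/- arXiv:1002.4312 — 4 statements merged into one kernel-verified Lean document; each statement's English description precedes it below -/
import Mathlib

section
/- Let P be a graded poset and F : P → Ab a projective object of the functor category Ab^P. Then for every object i₀ of P, the quotient Coker(i₀) = F(i₀)/Im(i₀) is a projective (i.e., free) abelian group. -/
open CategoryTheory

variable {P : Type} [PartialOrder P]

/-- `Im F i₀` is the subgroup of `F.obj i₀` generated by the images of `F.map α`
over all nonidentity morphisms `α : i ⟶ i₀` (in a poset these correspond to `i < i₀`). -/
def imSubgroup (F : P ⥤ AddCommGrpCat) (i₀ : P) : AddSubgroup (F.obj i₀) :=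
  ⨆ i : {i : P // i < i₀}, (F.map (homOfLE i.2.le)).hom.range

/-- Any submodule of a free `ℤ`-module `ι →₀ ℤ` is free. -/
theorem free_submodule_finsupp_int {ι : Type*} (N : Submodule ℤ (ι →₀ ℤ)) :
    Module.Free ℤ N := by
  classical
  letI : LinearOrder ι := linearOrderOfSTO WellOrderingRel
  haveI : WellFoundedLT ι := ⟨(inferInstance : IsWellOrder ι WellOrderingRel).wf⟩
  set S : ι → Submodule ℤ (ι →₀ ℤ) :=
    fun i => N ⊓ Finsupp.supported ℤ ℤ (Set.Iic i) with hS
  set J : ι → Ideal ℤ := fun i => (S i).map (Finsupp.lapply i) with hJ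
  set g : ι → ℤ := fun i => Submodule.IsPrincipal.generator (J i) with hg
  have hb : ∀ i, ∃ y, y ∈ S i ∧ y i = g i := by
    intro i
    obtain ⟨y, hy, hyi⟩ := Submodule.mem_map.mp (Submodule.IsPrincipal.generator_mem (J i))
    exact ⟨y, hy, by simpa [Finsupp.lapply_apply] using hyi⟩
  choose b hbS hbg using hb
  have hbN : ∀ i, b i ∈ N := fun i => ((hbS i).1)
  have hbsupp : ∀ i, ↑(b i).support ⊆ Set.Iic i := fun i =>
    (Finsupp.mem_supported ℤ _).mp (hbS i).2
  have hmemJ : ∀ i, ∀ x ∈ N, ↑x.support ⊆ Set.Iic i → x i ∈ J i := by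
    intro i x hx hsupp
    exact Submodule.mem_map_of_mem ⟨hx, (Finsupp.mem_supported ℤ _).mpr hsupp⟩
  have hgne : ∀ i, ∀ x ∈ N, ↑x.support ⊆ Set.Iic i → x i ≠ 0 → g i ≠ 0 := by
    intro i x hx hsupp hxi hgz
    have hJbot : J i = ⊥ :=
      (Submodule.IsPrincipal.eq_bot_iff_generator_eq_zero (J i)).mpr hgz
    have := hmemJ i x hx hsupp
    rw [hJbot, Submodule.mem_bot] at this
    exact hxi this
  -- the candidate basis vectors, indexed by indices with nonzero generator
  set T := {i : ι // g i ≠ 0} with hT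
  set v : T → (ι →₀ ℤ) := fun t => b t.1 with hv
  -- spanning
  have key : ∀ i : ι, ∀ x ∈ N, ↑x.support ⊆ Set.Iic i →
      x ∈ Submodule.span ℤ (Set.range v) := by
    intro i
    induction i using WellFoundedLT.induction with
    | _ i IH =>
      intro x hxN hsupp
      by_cases hx0 : x = 0
      · simp [hx0]
      have hne : x.support.Nonempty := Finsupp.support_nonempty_iff.mpr hx0
      set j := x.support.max' hne with hj
      have hji : j ≤ i := hsupp (x.support.max'_mem hne)
      have hsuppj : ↑x.support ⊆ Set.Iic j := fun k hk =>
        x.support.le_max' k hk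
      have hxj : x j ≠ 0 := Finsupp.mem_support_iff.mp (x.support.max'_mem hne)
      have hgj : g j ≠ 0 := hgne j x hxN hsuppj hxj
      obtain ⟨c, hc⟩ := (Submodule.IsPrincipal.mem_iff_eq_smul_generator (J j)).mp
        (hmemJ j x hxN hsuppj)
      set y := x - c • b j with hy
      have hyN : y ∈ N := N.sub_mem hxN (N.smul_mem c (hbN j))
      have hyj : y j = 0 := by
        simp [hy, hc, hbg j, hg, smul_eq_mul]
      have hysupp : ↑y.support ⊆ Set.Iic j := by
        intro k hk
        have := Finsupp.support_sub (f := x) (g := c • b j) hk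
        rcases Finset.mem_union.mp this with h | h
        · exact hsuppj h
        · exact hbsupp j (Finsupp.support_smul h)
      have hmem : x ∈ Submodule.span ℤ (Set.range v) ↔
          y ∈ Submodule.span ℤ (Set.range v) := by
        constructor <;> intro h
        · exact Submodule.sub_mem _ h (Submodule.smul_mem _ c
            (Submodule.subset_span ⟨⟨j, hgj⟩, rfl⟩))
        · have : x = y + c • b j := by simp [hy]
          rw [this]
          exact Submodule.add_mem _ h (Submodule.smul_mem _ c
            (Submodule.subset_span ⟨⟨j, hgj⟩, rfl⟩))
      rw [hmem]
      by_cases hy0 : y = 0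
      · simp [hy0]
      have hyne : y.support.Nonempty := Finsupp.support_nonempty_iff.mpr hy0
      set m := y.support.max' hyne with hm
      have hmj : m < j := by
        have hmle : m ≤ j := hysupp (y.support.max'_mem hyne)
        rcases lt_or_eq_of_le hmle with h | h
        · exact h
        · exfalso
          have : y m ≠ 0 := Finsupp.mem_support_iff.mp (y.support.max'_mem hyne)
          rw [h] at this; exact this hyj
      exact IH m (lt_of_lt_of_le hmj hji) y hyN
        (fun k hk => y.support.le_max' k hk)
  have hspan : Submodule.span ℤ (Set.range v) = N := by
    apply le_antisymm
    · rw [Submodule.span_le]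
      rintro _ ⟨t, rfl⟩
      exact hbN t.1
    · intro x hx
      by_cases hx0 : x = 0
      · simp [hx0]
      have hne : x.support.Nonempty := Finsupp.support_nonempty_iff.mpr hx0
      exact key (x.support.max' hne) x hx (fun k hk => x.support.le_max' k hk)
  -- linear independence
  have hli : LinearIndependent ℤ v := by
    rw [linearIndependent_iff]
    intro l hl
    by_contra hl0
    have hlne : l.support.Nonempty := Finsupp.support_nonempty_iff.mpr hl0
    set s := l.support.image (Subtype.val : T → ι) with hs
    have hsne : s.Nonempty := hlne.image _
    set i := s.max' hsne with hi
    obtain ⟨k, hk, hkval'⟩ := Finset.mem_image.mp (s.max'_mem hsne)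
    have hkval : (k : ι) = i := hkval'.trans hi.symm
    have heval : (Finsupp.linearCombination ℤ v l) i = 0 := by rw [hl]; rfl
    rw [Finsupp.linearCombination_apply, Finsupp.sum, Finsupp.finset_sum_apply] at heval
    rw [Finset.sum_eq_single k] at heval
    · have : l k * g i = 0 := by
        rw [Finsupp.smul_apply, smul_eq_mul] at heval
        rw [← heval, hv]
        congr 1
        rw [← hkval]
        exact (hbg k.1).symm
      exact mul_ne_zero (Finsupp.mem_support_iff.mp hk)
        (by rw [← hkval]; exact k.2) this
    · intro k' hk' hkk'
      have hk'le : k'.1 ≤ i := s.le_max' k'.1 (Finset.mem_image_of_mem _ hk')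
      have hk'lt : k'.1 < i := lt_of_le_of_ne hk'le
        (fun h => hkk' (Subtype.ext (h.trans hkval.symm)))
      have : (v k') i = 0 := by
        apply Finsupp.notMem_support_iff.mp
        intro hmem
        exact absurd (hbsupp k'.1 hmem) (not_le.mpr hk'lt)
      rw [Finsupp.smul_apply, this, smul_zero]
    · intro h; exact absurd hk h
  rw [← hspan]
  exact Module.Free.of_basis (Module.Basis.span hli)

open Classical in
/-- The constant diagram with zero transition maps (except identities). -/
noncomputable def zeroDiag (A : AddCommGrpCat) : P ⥤ AddCommGrpCat where
  obj _ := A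
  map {i j} _ := if i = j then 𝟙 A else 0
  map_id _ := if_pos rfl
  map_comp {i j k} f g := by
    by_cases hij : i = j
    · subst hij
      by_cases hjk : i = k
      · subst hjk; simp
      · simp [hjk]
    · have hik : i ≠ k := fun h => hij (le_antisymm (leOfHom f) (by rw [h]; exact leOfHom g))
      simp [hij, hik]

open Classical in
lemma zeroDiag_map (A : AddCommGrpCat) {i j : P} (f : i ⟶ j) :
    (zeroDiag A).map f = if i = j then 𝟙 A else 0 := rfl


/-- Let `P` be a graded poset and `F : P ⥤ Ab` a projective object of
the functor category `Ab^P`. Then for every object `i₀` the quotient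
`Coker(i₀) = F(i₀)/Im(i₀)` is a projective, i.e. free, abelian group. -/
theorem coker_free_of_projective
    (deg : P → ℤ) (hmono : Monotone deg)
    (hcov : ∀ ⦃a b : P⦄, a ⋖ b → deg b = deg a + 1)
    (F : P ⥤ AddCommGrpCat) (hF : Projective F) (i₀ : P) :
    Module.Free ℤ (F.obj i₀ ⧸ imSubgroup F i₀) := by
  classical
  haveI := hF
  let Q := F.obj i₀ ⧸ imSubgroup F i₀
  let QA : AddCommGrpCat := AddCommGrpCat.of Q
  let FA : AddCommGrpCat := AddCommGrpCat.of (Q →₀ ℤ)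
  let π : FA ⟶ QA :=
    AddCommGrpCat.ofHom (Finsupp.linearCombination ℤ (id : Q → Q)).toAddMonoidHom
  have hπ : Function.Surjective π := by
    intro q
    refine ⟨Finsupp.single q 1, ?_⟩
    show Finsupp.linearCombination ℤ (id : Q → Q) (Finsupp.single q 1) = q
    simp
  haveI hπe : Epi π := (AddCommGrpCat.epi_iff_surjective π).mpr hπ
  -- components of the natural transformation F ⟶ zeroDiag QA
  let ηapp : ∀ j : P, F.obj j ⟶ (zeroDiag QA).obj j := fun j =>
    if h : j ≤ i₀ then
      AddCommGrpCat.ofHom ((QuotientAddGroup.mk' (imSubgroup F i₀)).comp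
        (F.map (homOfLE h)).hom)
    else 0
  have ηapp_pos : ∀ (j : P) (h : j ≤ i₀), ηapp j
      = AddCommGrpCat.ofHom ((QuotientAddGroup.mk' (imSubgroup F i₀)).comp
        (F.map (homOfLE h)).hom) := fun j h => dif_pos h
  have ηapp_neg : ∀ (j : P), ¬ j ≤ i₀ → ηapp j = 0 := fun j h => dif_neg h
  have ηnat : ∀ {i j : P} (f : i ⟶ j),
      F.map f ≫ ηapp j = ηapp i ≫ (zeroDiag QA).map f := by
    intro i j f
    by_cases hij : i = j
    · subst hij
      have hf : f = 𝟙 i := Subsingleton.elim _ _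
      rw [hf, F.map_id, (zeroDiag QA).map_id, Category.id_comp, Category.comp_id]
    · rw [zeroDiag_map, if_neg hij]
      erw [Limits.comp_zero]
      by_cases hj : j ≤ i₀
      · rw [ηapp_pos j hj]
        have hii : i < i₀ := by
          refine lt_of_le_of_ne (le_trans (leOfHom f) hj) ?_
          intro h
          exact hij (le_antisymm (leOfHom f) (by rw [h]; exact hj))
        ext x
        show (QuotientAddGroup.mk' (imSubgroup F i₀))
          ((F.map (homOfLE hj)) ((F.map f) x)) = 0
        have hcomp : (F.map (homOfLE hj)) ((F.map f) x)
            = F.map (homOfLE hii.le) x := by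
          rw [show (F.map (homOfLE hj)) ((F.map f) x)
              = (F.map f ≫ F.map (homOfLE hj)) x from rfl, ← F.map_comp,
            show (f ≫ homOfLE hj) = homOfLE hii.le from Subsingleton.elim _ _]
        rw [hcomp, QuotientAddGroup.mk'_apply, QuotientAddGroup.eq_zero_iff]
        have hle : ((F.map (homOfLE hii.le)).hom.range : AddSubgroup (F.obj i₀))
            ≤ imSubgroup F i₀ :=
          le_iSup (fun i : {i : P // i < i₀} =>
            (F.map (homOfLE i.2.le)).hom.range) ⟨i, hii⟩
        exact hle ⟨x, rfl⟩
      · rw [ηapp_neg j hj, Limits.comp_zero]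
  let η : F ⟶ zeroDiag QA := { app := ηapp, naturality := fun _ _ f => ηnat f }
  -- the epimorphism of diagrams
  let e : zeroDiag FA ⟶ zeroDiag QA :=
    { app := fun _ => π
      naturality := by
        intro i j f
        rw [zeroDiag_map (P := P), zeroDiag_map (P := P)]
        by_cases hij : i = j
        · subst hij
          rw [if_pos rfl, if_pos rfl]
          show 𝟙 FA ≫ π = π ≫ 𝟙 QA
          rw [Category.id_comp, Category.comp_id]
        · rw [if_neg hij, if_neg hij]
          show (0 : (zeroDiag FA).obj i ⟶ FA) ≫ π = π ≫ (0 : QA ⟶ (zeroDiag QA).obj j)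
          rw [Limits.zero_comp, Limits.comp_zero]
          rfl }
  haveI he : Epi e := by
    constructor
    intro Z u w huw
    ext j x
    have h1 : π ≫ u.app j = π ≫ w.app j := by
      have := congrArg (fun t => t.app j) huw
      exact this
    have h2 : u.app j = w.app j := (cancel_epi π).mp h1
    rw [h2]
  let l : F ⟶ zeroDiag FA := Projective.factorThru η e
  have hfac : l ≫ e = η := Projective.factorThru_comp η e
  let s₀ := l.app i₀
  have hker : ∀ x ∈ imSubgroup F i₀, s₀ x = 0 := by
    have hsub : imSubgroup F i₀ ≤ s₀.hom.ker := by
      rw [imSubgroup]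
      apply iSup_le
      rintro ⟨i, hi⟩ x ⟨y, rfl⟩
      show s₀ ((F.map (homOfLE hi.le)) y) = 0
      have hnat : s₀ ((F.map (homOfLE hi.le)) y)
          = ((zeroDiag FA).map (homOfLE hi.le)) ((l.app i) y) :=
        congrArg (fun t => t y) (l.naturality (homOfLE hi.le))
      rw [hnat, zeroDiag_map, if_neg (ne_of_lt hi)]
      rfl
    intro x hx
    exact hsub hx
  let s : Q →+ FA := QuotientAddGroup.lift (imSubgroup F i₀) s₀.hom hker
  have hsec : Function.LeftInverse π s := by
    intro q
    induction q using QuotientAddGroup.induction_on with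
    | H x =>
      have h1 : s ((QuotientAddGroup.mk' (imSubgroup F i₀)) x) = s₀ x := rfl
      have h3 : π (s₀ x) = η.app i₀ x := congrArg (fun t => t.app i₀ x) hfac
      have h4 : η.app i₀ x = (QuotientAddGroup.mk' (imSubgroup F i₀)) x := by
        show ηapp i₀ x = _
        rw [ηapp_pos i₀ le_rfl]
        show (QuotientAddGroup.mk' (imSubgroup F i₀))
          ((F.map (homOfLE le_rfl)) x) = _
        rw [show homOfLE (le_refl i₀) = 𝟙 i₀ from Subsingleton.elim _ _, F.map_id]
        rfl
      show π (s ((QuotientAddGroup.mk' (imSubgroup F i₀)) x)) = _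
      rw [h1, h3, h4]
      rfl
  have hinj : Function.Injective s := hsec.injective
  let sl : Q →ₗ[ℤ] (Q →₀ ℤ) := s.toIntLinearMap
  haveI : Module.Free ℤ (LinearMap.range sl) := free_submodule_finsupp_int _
  exact Module.Free.of_equiv (LinearEquiv.ofInjective sl hinj).symm
end

section
/- Let P be the pushout category a → b, a → c (graded with deg(a)=0, deg(b)=deg(c)=1). A functor F : P → Ab is projective in Ab^P if and only if F(a), F(b)/Im F(a→b) and F(c)/Im F(a→c) are free abelian groups and both F(a→b) and F(a→c) are monomorphisms. -/
open Function

section Kaplansky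

variable {ι : Type*} [LinearOrder ι] [WellFoundedLT ι]

theorem free_of_submodule_finsupp (N : Submodule ℤ (ι →₀ ℤ)) : Module.Free ℤ N := by
  classical
  -- the submodule of elements supported on indices ≤ i
  set S : ι → Submodule ℤ (ι →₀ ℤ) := fun i =>
    { carrier := {x | ∀ j, i < j → x j = 0}
      add_mem' := fun hx hy j hj => by simp [hx j hj, hy j hj]
      zero_mem' := fun j hj => rfl
      smul_mem' := fun c x hx j hj => by simp [hx j hj] } with hS
  set I : ι → Submodule ℤ ℤ := fun i => Submodule.map (Finsupp.lapply i) (N ⊓ S i) with hI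
  set d : ι → ℤ := fun i => Submodule.IsPrincipal.generator (I i) with hd
  have hgen : ∀ i, ∃ x, (x ∈ N ∧ x ∈ S i) ∧ x i = d i := by
    intro i
    have := Submodule.IsPrincipal.generator_mem (I i)
    rw [hI] at this
    obtain ⟨x, hx, hxi⟩ := this
    exact ⟨x, hx, hxi⟩
  choose y hy hyd using hgen
  have hyN : ∀ i, y i ∈ N := fun i => (hy i).1
  have hyS : ∀ i, ∀ j, i < j → y i j = 0 := fun i => (hy i).2
  -- linear independence of the chosen elements (for nonzero d)
  have hind : LinearIndependent ℤ (fun j : {i : ι // d i ≠ 0} => y j.1) := by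
    rw [linearIndependent_iff']
    intro s g hsum j hj
    by_contra hg
    set t := s.filter (fun j => g j ≠ 0) with ht
    have htne : t.Nonempty := ⟨j, Finset.mem_filter.2 ⟨hj, hg⟩⟩
    set j₀ := t.max' htne with hj₀
    have hj₀t : j₀ ∈ t := t.max'_mem htne
    have hj₀s : j₀ ∈ s := (Finset.mem_filter.1 hj₀t).1
    have happ := congrArg (fun z : ι →₀ ℤ => z j₀.1) hsum
    simp only [Finsupp.finset_sum_apply, Finsupp.smul_apply, smul_eq_mul,
      Finsupp.coe_zero, Pi.zero_apply] at happ
    rw [Finset.sum_eq_single_of_mem j₀ hj₀s] at happ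
    · have : g j₀ ≠ 0 := (Finset.mem_filter.1 hj₀t).2
      have := mul_eq_zero.1 happ
      rw [hyd j₀.1] at this
      rcases this with h | h
      · exact ‹g j₀ ≠ 0› h
      · exact j₀.2 h
    · intro i his hij
      by_cases hgi : g i = 0
      · simp [hgi]
      · have hit : i ∈ t := Finset.mem_filter.2 ⟨his, hgi⟩
        have : i < j₀ := lt_of_le_of_ne (t.le_max' i hit) hij
        have : i.1 < j₀.1 := this
        rw [hyS i.1 j₀.1 this, mul_zero]
  -- spanning
  have hspan : ∀ x ∈ N, x ∈ Submodule.span ℤ (Set.range fun j : {i : ι // d i ≠ 0} => y j.1) := by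
    intro x hx
    have main : ∀ m : WithBot ι, ∀ x, x ∈ N → x.support.max ≤ m →
        x ∈ Submodule.span ℤ (Set.range fun j : {i : ι // d i ≠ 0} => y j.1) := by
      intro m
      induction m using WellFoundedLT.induction with
      | ind m IH =>
        intro x hxN hxm
        by_cases hx0 : x = 0
        · simp [hx0]
        · have hne : x.support.Nonempty := Finsupp.support_nonempty_iff.2 hx0
          set i₀ := x.support.max' hne with hi₀
          have hxS : x ∈ S i₀ := by
            intro j hj
            by_contra hxj
            exact absurd (x.support.le_max' j (Finsupp.mem_support_iff.2 hxj)) (not_le.2 hj)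
          have hmem : x i₀ ∈ I i₀ := ⟨x, ⟨hxN, hxS⟩, rfl⟩
          obtain ⟨c, hc⟩ := (Submodule.IsPrincipal.mem_iff_eq_smul_generator (I i₀)).1 hmem
          have hc' : x i₀ = c * d i₀ := by rw [hc, smul_eq_mul]
          have hd0 : d i₀ ≠ 0 := by
            intro h0
            have : x i₀ ≠ 0 := Finsupp.mem_support_iff.1 (x.support.max'_mem hne)
            rw [hc', h0, mul_zero] at this
            exact this rfl
          set x' := x - c • y i₀ with hx'
          have hx'N : x' ∈ N := N.sub_mem hxN (N.smul_mem c (hyN i₀))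
          have hkey : ∀ j, x' j ≠ 0 → j < i₀ := by
            intro j hjx'
            by_contra hji
            rw [not_lt] at hji
            rcases eq_or_lt_of_le hji with h | h
            · apply hjx'
              subst h
              simp [hx', hc', hyd i₀, Finsupp.sub_apply, mul_comm]
            · apply hjx'
              simp [hx', Finsupp.sub_apply, hxS j h, hyS i₀ j h]
          have hx'max : x'.support.max < (i₀ : WithBot ι) := by
            by_cases h0 : x' = 0
            · rw [h0]
              simp only [Finsupp.support_zero, Finset.max_empty]
              exact WithBot.bot_lt_coe _
            · have hne' : x'.support.Nonempty := Finsupp.support_nonempty_iff.2 h0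
              rw [← Finset.coe_max' hne', WithBot.coe_lt_coe]
              exact (Finset.max'_lt_iff _ hne').2
                (fun j hj => hkey j (Finsupp.mem_support_iff.1 hj))
          have hx'span := IH _ (lt_of_lt_of_le hx'max (by
            have : (i₀ : WithBot ι) ≤ m := le_trans (Finset.le_max (x.support.max'_mem hne)) hxm
            exact this)) x' hx'N le_rfl
          have hxeq : x = x' + c • y i₀ := by rw [hx']; abel
          rw [hxeq]
          exact Submodule.add_mem _ hx'span
            (Submodule.smul_mem _ _ (Submodule.subset_span ⟨⟨i₀, hd0⟩, rfl⟩))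
    exact main x.support.max x hx le_rfl
  have hind' : LinearIndependent ℤ
      (fun j : {i : ι // d i ≠ 0} => (⟨y j.1, hyN j.1⟩ : N)) :=
    LinearIndependent.of_comp N.subtype hind
  have hsp : ⊤ ≤ Submodule.span ℤ
      (Set.range fun j : {i : ι // d i ≠ 0} => (⟨y j.1, hyN j.1⟩ : N)) := by
    rintro ⟨x, hxN⟩ -
    have h1 := hspan x hxN
    have h2 : Submodule.span ℤ (Set.range fun j : {i : ι // d i ≠ 0} => y j.1) =
        Submodule.map N.subtype (Submodule.span ℤ
          (Set.range fun j : {i : ι // d i ≠ 0} => (⟨y j.1, hyN j.1⟩ : N))) := by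
      rw [Submodule.map_span]
      congr 1
      rw [← Set.range_comp]
      rfl
    rw [h2] at h1
    obtain ⟨z, hz, hzx⟩ := h1
    have hz2 : z = ⟨x, hxN⟩ := Subtype.ext hzx
    rwa [← hz2]
  exact Module.Free.of_basis (Module.Basis.mk hind' hsp)

end Kaplansky

theorem free_of_addHom_injective {M : Type*} {N : Type*} [AddCommGroup M] [AddCommGroup N]
    [Module.Free ℤ N] (f : M →+ N) (hf : Function.Injective f) : Module.Free ℤ M := by
  classical
  set κ := Module.Free.ChooseBasisIndex ℤ N with hκ
  letI : LinearOrder κ := IsWellOrder.linearOrder WellOrderingRel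
  haveI : WellFoundedLT κ := ⟨(WellOrderingRel.isWellOrder (α := κ)).wf⟩
  let b := Module.Free.chooseBasis ℤ N
  let g : M →ₗ[ℤ] (κ →₀ ℤ) := (b.repr : N ≃ₗ[ℤ] (κ →₀ ℤ)).toLinearMap.comp f.toIntLinearMap
  have hg : Function.Injective g := by
    intro u v huv
    apply hf
    apply b.repr.injective
    exact huv
  have : Module.Free ℤ (LinearMap.range g) := free_of_submodule_finsupp _
  exact Module.Free.of_equiv (LinearEquiv.ofInjective g hg).symm
open CategoryTheory Function

universe u

section QFunctor

variable {P : Type} [PartialOrder P] (F : P ⥤ AddCommGrpCat.{u})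

/-- Index type for the canonical free cover of `F` at `p`. -/
def QT (p : P) : Type u := Σ x : P, PLift (x ≤ p) × (F.obj x)

def Qsig {p q : P} (h : p ≤ q) : QT F p → QT F q :=
  fun t => ⟨t.1, ⟨⟨t.2.1.down.trans h⟩, t.2.2⟩⟩

lemma Qsig_injective {p q : P} (h : p ≤ q) : Function.Injective (Qsig F h) := by
  rintro ⟨x1, ⟨h1⟩, s1⟩ ⟨x2, ⟨h2⟩, s2⟩ heq
  obtain ⟨rfl, h2'⟩ := Sigma.mk.inj_iff.mp heq
  have h3 : (⟨⟨h1.trans h⟩, s1⟩ : PLift (x1 ≤ q) × F.obj x1) =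
      ⟨⟨h2.trans h⟩, s2⟩ := eq_of_heq h2'
  have hs : s1 = s2 := congrArg Prod.snd h3
  subst hs
  rfl

/-- The canonical free cover of `F`. -/
noncomputable def Qfun : P ⥤ AddCommGrpCat.{u} where
  obj p := AddCommGrpCat.of (QT F p →₀ ℤ)
  map {p q} h := AddCommGrpCat.ofHom (Finsupp.mapDomain.addMonoidHom (Qsig F (leOfHom h)))
  map_id p := by
    apply AddCommGrpCat.ext; intro x
    show Finsupp.mapDomain (Qsig F (le_refl p)) x = x
    have h : Qsig F (le_refl p) = id := rfl
    rw [h, Finsupp.mapDomain_id]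
  map_comp {p q r} f g := by
    apply AddCommGrpCat.ext; intro x
    show Finsupp.mapDomain (Qsig F _) x = Finsupp.mapDomain (Qsig F _) (Finsupp.mapDomain (Qsig F _) x)
    rw [← Finsupp.mapDomain_comp]
    rfl

/-- The canonical epimorphism from the free cover to `F`. -/
noncomputable def Qpi : Qfun F ⟶ F where
  app p := AddCommGrpCat.ofHom (Finsupp.liftAddHom
    (fun t : QT F p => zmultiplesHom _ (F.map (homOfLE t.2.1.down) t.2.2)))
  naturality p q h := by
    apply AddCommGrpCat.hom_ext
    refine Finsupp.addHom_ext fun t n => ?_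
    show (Finsupp.liftAddHom _) (Finsupp.mapDomain (Qsig F (leOfHom h)) (Finsupp.single t n))
      = F.map h ((Finsupp.liftAddHom _) (Finsupp.single t n))
    rw [Finsupp.mapDomain_single, Finsupp.liftAddHom_apply_single,
      Finsupp.liftAddHom_apply_single, zmultiplesHom_apply, zmultiplesHom_apply, map_zsmul]
    congr 1
    show F.map (homOfLE t.2.1.down ≫ h) t.2.2 = F.map h (F.map (homOfLE t.2.1.down) t.2.2)
    rw [F.map_comp]
    rfl

lemma Qpi_surjective (p : P) : Function.Surjective ((Qpi F).app p) := by
  intro s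
  refine ⟨Finsupp.single ⟨p, ⟨le_rfl⟩, s⟩ 1, ?_⟩
  show (Finsupp.liftAddHom _) (Finsupp.single (⟨p, ⟨le_rfl⟩, s⟩ : QT F p) 1) = s
  erw [Finsupp.liftAddHom_apply_single, zmultiplesHom_apply, one_zsmul]
  show F.map (𝟙 p) s = s
  rw [F.map_id]
  rfl

end QFunctor

section Helpers

theorem free_of_addHom_injective' {M N : Type*} [AddCommGroup M] [AddCommGroup N]
    {mN : Module ℤ N} (hfree : @Module.Free ℤ N _ _ mN) (f : M →+ N)
    (hf : Function.Injective f) : Module.Free ℤ M := by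
  haveI : @Module.Free ℤ N _ _ (AddCommGroup.toIntModule N) := by
    have e : mN = AddCommGroup.toIntModule N :=
      @Subsingleton.elim _ (@Unique.instSubsingleton _ AddCommGroup.uniqueIntModule) _ _
    exact e ▸ hfree
  exact free_of_addHom_injective f hf

theorem addHom_lift {A B C : Type*} [AddCommGroup A] [AddCommGroup B] [AddCommGroup C]
    [Module.Free ℤ A] (e : B →+ C) (he : Function.Surjective e) (f : A →+ C) :
    ∃ l : A →+ B, ∀ x, e (l x) = f x := by
  obtain ⟨l, hl⟩ := Module.projective_lifting_property e.toIntLinearMap f.toIntLinearMap he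
  exact ⟨l.toAddMonoidHom, fun x => DFunLike.congr_fun hl x⟩

end Helpers

/-- Let `P` be the pushout category `b ⟵ a ⟶ c`, i.e. a poset with
exactly three elements: a unique minimal element `a` and two incomparable maximal
elements `b, c` (graded with `deg a = 0`, `deg b = deg c = 1`).  A functor
`F : P ⥤ Ab` is projective in `Ab^P` if and only if `F(a)`, `F(b)/Im F(a→b)` and
`F(c)/Im F(a→c)` are free abelian groups and both `F(a→b)` and `F(a→c)` are
monomorphisms. -/
theorem pushout_projective_iff
    {P : Type} [PartialOrder P] (a b c : P)
    (hab : a < b) (hac : a < c)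
    (hbc : ¬ b ≤ c) (hcb : ¬ c ≤ b)
    (hall : ∀ p : P, p = a ∨ p = b ∨ p = c)
    (F : P ⥤ AddCommGrpCat) :
    Projective F ↔
      (Module.Free ℤ (F.obj a) ∧
       Module.Free ℤ (F.obj b ⧸ (F.map (homOfLE hab.le)).hom.range) ∧
       Module.Free ℤ (F.obj c ⧸ (F.map (homOfLE hac.le)).hom.range) ∧
       Function.Injective (F.map (homOfLE hab.le)) ∧
       Function.Injective (F.map (homOfLE hac.le))) := by
  classical
  constructor
  · intro hproj
    set π := Qpi F with hπdef
    haveI : ∀ p : P, Epi (π.app p) :=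
      fun p => (AddCommGrpCat.epi_iff_surjective _).2 (Qpi_surjective F p)
    haveI : Epi π := NatTrans.epi_of_epi_app π
    set s := Projective.factorThru (𝟙 F) π with hsdef
    have hs : s ≫ π = 𝟙 F := Projective.factorThru_comp _ _
    have hsp : ∀ (p : P) (x : F.obj p), π.app p (s.app p x) = x := by
      intro p x
      have h1 := congrArg (fun τ : F ⟶ F => τ.app p x) hs
      simpa using h1
    have hsnat : ∀ {p q : P} (h : p ≤ q) (x : F.obj p),
        s.app q (F.map (homOfLE h) x) = (Qfun F).map (homOfLE h) (s.app p x) := by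
      intro p q h x
      exact congrArg (fun g : F.obj p ⟶ (Qfun F).obj q => g x) (s.naturality (homOfLE h))
    -- injectivity of all structure maps
    have hinjmap : ∀ {p q : P} (h : p ≤ q), Function.Injective (F.map (homOfLE h)) := by
      intro p q h x y hxy
      have hsinj : Function.Injective (s.app p) := by
        intro u v huv
        have := congrArg (π.app p) huv
        rwa [hsp, hsp] at this
      have hQinj : Function.Injective ((Qfun F).map (homOfLE h)) := by
        show Function.Injective (Finsupp.mapDomain (Qsig F h))
        exact Finsupp.mapDomain_injective (Qsig_injective F h)
      apply hsinj
      apply hQinj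
      show (Qfun F).map (homOfLE h) (s.app p x) = (Qfun F).map (homOfLE h) (s.app p y)
      rw [← hsnat h x, ← hsnat h y, hxy]
    -- freeness of F.obj a
    have hsinj : ∀ p : P, Function.Injective (s.app p) := by
      intro p u v huv
      have := congrArg (π.app p) huv
      rwa [hsp, hsp] at this
    have hfa : Module.Free ℤ (F.obj a) :=
      free_of_addHom_injective' (inferInstance : Module.Free ℤ (QT F a →₀ ℤ))
        (s.app a).hom (hsinj a)
    -- freeness of the cokernels
    have hcok : ∀ (p q : P) (h : p ≤ q),
        Module.Free ℤ (F.obj q ⧸ (F.map (homOfLE h)).hom.range) := by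
      intro p q h
      set σ := Qsig F h with hσ
      have hσinj : Function.Injective σ := Qsig_injective F h
      set φ : F.obj q →+ ({t : QT F q // t ∉ Set.range σ} →₀ ℤ) :=
        (Finsupp.subtypeDomainAddMonoidHom (p := fun t => t ∉ Set.range σ)).comp
          (s.app q).hom with hφ
      have hker : (F.map (homOfLE h)).hom.range ≤ φ.ker := by
        rintro _ ⟨x, rfl⟩
        show φ (F.map (homOfLE h) x) = 0
        have h1 : s.app q (F.map (homOfLE h) x) = Finsupp.mapDomain σ (s.app p x) := hsnat h x
        ext u
        show Finsupp.subtypeDomain _ (s.app q (F.map (homOfLE h) x)) u = 0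
        rw [h1, Finsupp.subtypeDomain_apply]
        by_contra hne
        have hmem : u.1 ∈ (Finsupp.mapDomain σ (s.app p x)).support :=
          Finsupp.mem_support_iff.2 hne
        have := Finsupp.mapDomain_support hmem
        obtain ⟨t, -, heq⟩ := Finset.mem_image.1 this
        exact u.2 ⟨t, heq⟩
      set ψ := QuotientAddGroup.lift _ φ hker with hψ
      have hψinj : Function.Injective ψ := by
        rw [injective_iff_map_eq_zero]
        intro z hz
        induction z using QuotientAddGroup.induction_on with
        | H x =>
          have hφx : φ x = 0 := hz
          let w : QT F q →₀ ℤ := s.app q x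
          have hsupp : ↑w.support ⊆ Set.range σ := by
            intro t ht
            by_contra hmem
            have h2 : w t = 0 := by
              have := congrArg (fun w : {t : QT F q // t ∉ Set.range σ} →₀ ℤ =>
                w ⟨t, hmem⟩) hφx
              exact this
            exact (Finsupp.mem_support_iff.1 ht) h2
          set v := Finsupp.comapDomain σ w (hσinj.injOn) with hv
          have hmv : Finsupp.mapDomain σ v = w :=
            Finsupp.mapDomain_comapDomain σ hσinj _ hsupp
          have hx : x = F.map (homOfLE h) (π.app p v) := by
            have hnatπ : π.app q ((Qfun F).map (homOfLE h) v) = F.map (homOfLE h) (π.app p v) :=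
              congrArg (fun g : (Qfun F).obj p ⟶ F.obj q => g v) (π.naturality (homOfLE h))
            calc x = π.app q (s.app q x) := (hsp q x).symm
            _ = π.app q (Finsupp.mapDomain σ v) := by rw [hmv]
            _ = π.app q ((Qfun F).map (homOfLE h) v) := rfl
            _ = F.map (homOfLE h) (π.app p v) := hnatπ
          show ((x : F.obj q) : F.obj q ⧸ (F.map (homOfLE h)).hom.range) = 0
          rw [QuotientAddGroup.eq_zero_iff]
          exact ⟨π.app p v, hx.symm⟩
      exact free_of_addHom_injective'
        (inferInstance : Module.Free ℤ ({t : QT F q // t ∉ Set.range σ} →₀ ℤ)) ψ hψinj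
    exact ⟨hfa, hcok a b hab.le, hcok a c hac.le, hinjmap hab.le, hinjmap hac.le⟩
  · rintro ⟨hfa, hfb, hfc, hinjb, hinjc⟩
    constructor
    intro E X f e he
    have hesurj : ∀ p : P, Function.Surjective (e.app p) := fun p =>
      (AddCommGrpCat.epi_iff_surjective (e.app p)).1 inferInstance
    -- lift at a
    haveI := hfa
    obtain ⟨la, hla⟩ := addHom_lift (e.app a).hom (hesurj a)
      (f.app a).hom
    -- lifts at the maximal points
    have hbranch : ∀ (p : P) (h : a ≤ p),
        Module.Free ℤ (F.obj p ⧸ (F.map (homOfLE h)).hom.range) →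
        Function.Injective (F.map (homOfLE h)) →
        ∃ lp : F.obj p →+ E.obj p, (∀ x, e.app p (lp x) = f.app p x) ∧
          (∀ y, lp (F.map (homOfLE h) y) = E.map (homOfLE h) (la y)) := by
      intro p h hfree hinj
      haveI := hfree
      set Fh : F.obj a →+ F.obj p := (F.map (homOfLE h)).hom with hFh
      set R : AddSubgroup (F.obj p) := Fh.range with hR
      set mk : F.obj p →+ F.obj p ⧸ R := QuotientAddGroup.mk' R with hmk
      obtain ⟨sec, hsec⟩ := addHom_lift mk (QuotientAddGroup.mk'_surjective R)
        (AddMonoidHom.id (F.obj p ⧸ R))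
      set ρ : F.obj p →+ F.obj p := AddMonoidHom.id (F.obj p) - sec.comp mk with hρdef
      have hρval : ∀ x, ρ x = x - sec (mk x) := fun x => rfl
      have hρmem : ∀ x, ρ x ∈ R := by
        intro x
        have h0 : mk (ρ x) = 0 := by
          rw [hρval, map_sub]
          have : mk (sec (mk x)) = mk x := hsec (mk x)
          rw [this, sub_self]
        have := (QuotientAddGroup.eq_zero_iff (ρ x)).1 h0
        exact this
      have hρex : ∀ x, ∃ y, Fh y = ρ x := fun x => AddMonoidHom.mem_range.1 (hρmem x)
      choose r hr using hρex
      have hradd : ∀ x y, r (x + y) = r x + r y := by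
        intro x y
        apply hinj
        show Fh (r (x + y)) = Fh (r x + r y)
        rw [hr, map_add, map_add, hr, hr]
      set rhom : F.obj p →+ F.obj a := AddMonoidHom.mk' r hradd with hrhom
      obtain ⟨t, ht⟩ := addHom_lift (e.app p).hom (hesurj p)
        ((f.app p).hom.comp sec)
      refine ⟨((E.map (homOfLE h)).hom.comp (la.comp rhom)) + t.comp mk,
        ?_, ?_⟩
      · intro x
        have hnatE : e.app p (E.map (homOfLE h) (la (rhom x)))
            = X.map (homOfLE h) (e.app a (la (rhom x))) :=
          congrArg (fun g : E.obj a ⟶ X.obj p => g (la (rhom x))) (e.naturality (homOfLE h))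
        have hnatF : f.app p (Fh (rhom x)) = X.map (homOfLE h) (f.app a (rhom x)) :=
          congrArg (fun g : F.obj a ⟶ X.obj p => g (rhom x)) (f.naturality (homOfLE h))
        have hterm : e.app p (t (mk x)) = f.app p (sec (mk x)) := ht (mk x)
        show e.app p (E.map (homOfLE h) (la (rhom x)) + t (mk x)) = f.app p x
        rw [map_add, hnatE, hla, hterm]
        have hFhr : Fh (rhom x) = ρ x := hr x
        have : X.map (homOfLE h) (f.app a (rhom x)) = f.app p (ρ x) := by
          rw [← hnatF, hFhr]
        rw [this, ← map_add]
        congr 1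
        rw [hρval]
        abel
      · intro y
        have h0 : mk (Fh y) = 0 := (QuotientAddGroup.eq_zero_iff (Fh y)).2 ⟨y, rfl⟩
        have hry : rhom (Fh y) = y := by
          apply hinj
          show Fh (r (Fh y)) = Fh y
          rw [hr]
          show Fh y - sec (mk (Fh y)) = Fh y
          rw [h0, map_zero, sub_zero]
        show E.map (homOfLE h) (la (rhom (Fh y))) + t (mk (Fh y)) = E.map (homOfLE h) (la y)
        rw [hry, h0, map_zero, add_zero]
    obtain ⟨lb, hlb, hlbnat⟩ := hbranch b hab.le hfb hinjb
    obtain ⟨lc, hlc, hlcnat⟩ := hbranch c hac.le hfc hinjc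
    -- assemble the natural transformation
    have hba : ¬ b = a := fun hh => (hab.ne (hh.symm)).elim
    have hca : ¬ c = a := fun hh => (hac.ne (hh.symm)).elim
    set lapp : ∀ p : P, F.obj p ⟶ E.obj p := fun p =>
      if hpa : p = a then
        eqToHom (congrArg F.obj hpa) ≫ (AddCommGrpCat.ofHom la : F.obj a ⟶ E.obj a) ≫ eqToHom (congrArg E.obj hpa.symm)
      else if hpb : p = b then
        eqToHom (congrArg F.obj hpb) ≫ (AddCommGrpCat.ofHom lb : F.obj b ⟶ E.obj b) ≫ eqToHom (congrArg E.obj hpb.symm)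
      else
        eqToHom (congrArg F.obj (((hall p).resolve_left hpa).resolve_left hpb)) ≫
          (AddCommGrpCat.ofHom lc : F.obj c ⟶ E.obj c) ≫
          eqToHom (congrArg E.obj (((hall p).resolve_left hpa).resolve_left hpb).symm)
      with hlapp
    have happa : lapp a = (AddCommGrpCat.ofHom la : F.obj a ⟶ E.obj a) := by
      rw [hlapp]
      simp
    have happb : lapp b = (AddCommGrpCat.ofHom lb : F.obj b ⟶ E.obj b) := by
      rw [hlapp]
      simp only [dif_neg hba, dif_pos rfl]
      simp
    have happc : lapp c = (AddCommGrpCat.ofHom lc : F.obj c ⟶ E.obj c) := by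
      have hcb' : ¬ c = b := fun hh => hcb (le_of_eq hh)
      rw [hlapp]
      simp only [dif_neg hca, dif_neg hcb']
      simp
    have hnatab : (F.map (homOfLE hab.le) : F.obj a ⟶ F.obj b) ≫ lapp b
        = lapp a ≫ E.map (homOfLE hab.le) := by
      rw [happa, happb]
      ext x
      exact hlbnat x
    have hnatac : (F.map (homOfLE hac.le) : F.obj a ⟶ F.obj c) ≫ lapp c
        = lapp a ≫ E.map (homOfLE hac.le) := by
      rw [happa, happc]
      ext x
      exact hlcnat x
    have hnat : ∀ (p q : P) (hpq : p ⟶ q), F.map hpq ≫ lapp q = lapp p ≫ E.map hpq := by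
      intro p q hpq
      obtain ⟨⟨hle⟩⟩ := hpq
      rcases hall p with rfl | rfl | rfl <;> rcases hall q with rfl | rfl | rfl
      · show F.map (𝟙 _) ≫ lapp _ = lapp _ ≫ E.map (𝟙 _)
        rw [F.map_id, E.map_id, Category.id_comp, Category.comp_id]
      · exact hnatab
      · exact hnatac
      · exact absurd (le_antisymm hle hab.le) hba
      · show F.map (𝟙 _) ≫ lapp _ = lapp _ ≫ E.map (𝟙 _)
        rw [F.map_id, E.map_id, Category.id_comp, Category.comp_id]
      · exact absurd hle hbc
      · exact absurd (le_antisymm hle hac.le) hca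
      · exact absurd hle hcb
      · show F.map (𝟙 _) ≫ lapp _ = lapp _ ≫ E.map (𝟙 _)
        rw [F.map_id, E.map_id, Category.id_comp, Category.comp_id]
    refine ⟨⟨lapp, fun {p q} hpq => hnat p q hpq⟩, ?_⟩
    apply NatTrans.ext
    funext p
    show lapp p ≫ e.app p = f.app p
    rcases hall p with rfl | rfl | rfl
    · rw [happa]
      ext x
      exact hla x
    · rw [happb]
      ext x
      exact hlb x
    · rw [happc]
      ext x
      exact hlc x
end

section
/- Let P be the pushout category a → b, a → c and F : P → Ab a functor such that F(a→b) and F(a→c) are monomorphisms. Then colim₁ F = 0 and colimᵢ F = 0 for all i ≥ 1. -/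
open CategoryTheory CategoryTheory.Limits

/-- Bundled data for a pushout-shaped poset. -/
structure SpanData (P : Type) [PartialOrder P] : Type where
  a : P
  b : P
  c : P
  hab : a < b
  hac : a < c
  hbc : ¬ b ≤ c
  hcb : ¬ c ≤ b
  hall : ∀ p : P, p = a ∨ p = b ∨ p = c

namespace SpanData

universe u

variable {P : Type} [PartialOrder P] (D : SpanData P)

lemma le_a : ∀ p, D.a ≤ p := by
  intro p
  rcases D.hall p with h | h | h <;> subst h
  exacts [le_refl _, D.hab.le, D.hac.le]

lemma not_b_le_a : ¬ D.b ≤ D.a := fun h => D.hbc (h.trans D.hac.le)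
lemma not_c_le_a : ¬ D.c ≤ D.a := fun h => D.hcb (h.trans D.hab.le)

lemma not_b_le_of_c_le {p : P} (h : D.c ≤ p) : ¬ D.b ≤ p := by
  rcases D.hall p with h' | h' | h' <;> subst h'
  · exact D.not_b_le_a
  · exact absurd h D.hcb
  · exact D.hbc

lemma le_b_of_b_le {p : P} (h : D.b ≤ p) : p ≤ D.b := by
  rcases D.hall p with h' | h' | h' <;> subst h'
  · exact absurd h D.not_b_le_a
  · exact le_rfl
  · exact absurd h D.hbc

lemma le_c_of_c_le {p : P} (h : D.c ≤ p) : p ≤ D.c := by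
  rcases D.hall p with h' | h' | h' <;> subst h'
  · exact absurd h D.not_c_le_a
  · exact absurd h D.hcb
  · exact le_rfl

lemma le_c_of_not_le_b {p : P} (h : ¬ p ≤ D.b) : p ≤ D.c := by
  rcases D.hall p with h' | h' | h' <;> subst h'
  · exact absurd (D.le_a D.b) h
  · exact absurd le_rfl h
  · exact le_rfl

lemma map_comp_homOfLE (G : P ⥤ AddCommGrpCat.{u}) {p q r : P} (h : p ≤ q) (h' : q ⟶ r)
    (h'' : p ≤ r) : G.map (homOfLE h) ≫ G.map h' = G.map (homOfLE h'') := by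
  rw [← G.map_comp]
  exact congrArg G.map (Subsingleton.elim _ _)

lemma map_homOfLE_comp (G : P ⥤ AddCommGrpCat.{u}) {p q r : P} (h : p ⟶ q) (h' : q ≤ r)
    (h'' : p ≤ r) : G.map h ≫ G.map (homOfLE h') = G.map (homOfLE h'') := by
  rw [← G.map_comp]
  exact congrArg G.map (Subsingleton.elim _ _)

lemma isIso_map (G : P ⥤ AddCommGrpCat.{u}) {x y : P} (h : x ≤ y) (h' : y ≤ x) :
    IsIso (G.map (homOfLE h)) :=
  ⟨G.map (homOfLE h'),
    by rw [← G.map_comp, show homOfLE h ≫ homOfLE h' = 𝟙 x from Subsingleton.elim _ _,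
      G.map_id],
    by rw [← G.map_comp, show homOfLE h' ≫ homOfLE h = 𝟙 y from Subsingleton.elim _ _,
      G.map_id]⟩

section W
variable (G : P ⥤ AddCommGrpCat.{u})

open Classical in
/-- the object part of the auxiliary covering functor -/
noncomputable def Wobj (p : P) : AddCommGrpCat.{u} :=
  if D.b ≤ p then (G.obj D.a ⊞ G.obj D.b)
  else if D.c ≤ p then (G.obj D.a ⊞ G.obj D.c)
  else G.obj D.a

lemma Wobj_b {p : P} (hp : D.b ≤ p) : Wobj D G p = (G.obj D.a ⊞ G.obj D.b) := by
  simp only [Wobj, if_pos hp]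

lemma Wobj_c {p : P} (hp : ¬ D.b ≤ p) (hp' : D.c ≤ p) :
    Wobj D G p = (G.obj D.a ⊞ G.obj D.c) := by
  simp only [Wobj, if_neg hp, if_pos hp']

lemma Wobj_a {p : P} (hp : ¬ D.b ≤ p) (hp' : ¬ D.c ≤ p) : Wobj D G p = G.obj D.a := by
  simp only [Wobj, if_neg hp, if_neg hp']

open Classical in
/-- the map part of the auxiliary covering functor -/
noncomputable def Wmap {p q : P} (h : p ≤ q) : Wobj D G p ⟶ Wobj D G q :=
  if hp : D.b ≤ p then eqToHom (by rw [D.Wobj_b G hp, D.Wobj_b G (hp.trans h)])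
  else if hp' : D.c ≤ p then
    eqToHom (by rw [D.Wobj_c G hp hp',
      D.Wobj_c G (D.not_b_le_of_c_le (hp'.trans h)) (hp'.trans h)])
  else eqToHom (D.Wobj_a G hp hp') ≫
    (if hq : D.b ≤ q then (biprod.inl : G.obj D.a ⟶ _) ≫ eqToHom (D.Wobj_b G hq).symm
     else if hq' : D.c ≤ q then
       (biprod.inl : G.obj D.a ⟶ G.obj D.a ⊞ G.obj D.c) ≫ eqToHom (D.Wobj_c G hq hq').symm
     else eqToHom ((D.Wobj_a G hq hq').symm))

/-- The auxiliary covering functor. -/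
noncomputable def W : P ⥤ AddCommGrpCat.{u} where
  obj := Wobj D G
  map {p q} h := Wmap D G (leOfHom h)
  map_id p := by
    by_cases hp : D.b ≤ p
    · simp only [Wmap, dif_pos hp, eqToHom_refl]
    · by_cases hp' : D.c ≤ p
      · simp only [Wmap, dif_neg hp, dif_pos hp', eqToHom_refl]
      · simp only [Wmap, dif_neg hp, dif_neg hp', eqToHom_trans, eqToHom_refl]
  map_comp {p q r} h h' := by
    by_cases hp : D.b ≤ p
    · simp only [Wmap, dif_pos hp, dif_pos (hp.trans (leOfHom h)), eqToHom_trans]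
    · by_cases hp' : D.c ≤ p
      · simp only [Wmap, dif_neg hp, dif_pos hp',
          dif_neg (D.not_b_le_of_c_le (hp'.trans (leOfHom h))),
          dif_pos (hp'.trans (leOfHom h)), eqToHom_trans]
      · by_cases hq : D.b ≤ q
        · simp only [Wmap, dif_neg hp, dif_neg hp', dif_pos hq,
            dif_pos (hq.trans (leOfHom h')), eqToHom_trans, Category.assoc, eqToHom_trans_assoc,
            eqToHom_refl, Category.id_comp]
        · by_cases hq' : D.c ≤ q
          · simp only [Wmap, dif_neg hp, dif_neg hp', dif_pos hq', dif_neg hq,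
              dif_neg (D.not_b_le_of_c_le (hq'.trans (leOfHom h'))),
              dif_pos (hq'.trans (leOfHom h')), eqToHom_trans, Category.assoc,
              eqToHom_trans_assoc, eqToHom_refl, Category.id_comp]
          · simp only [Wmap, dif_neg hp, dif_neg hp', dif_neg hq, dif_neg hq',
              eqToHom_trans, Category.assoc, eqToHom_trans_assoc, eqToHom_refl,
              Category.id_comp]

open Classical in
/-- The canonical epimorphism `W D G ⟶ G`. -/
noncomputable def qW : W D G ⟶ G where
  app p :=
    if hp : D.b ≤ p then
      eqToHom (D.Wobj_b G hp) ≫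
        biprod.desc (G.map (homOfLE (D.le_a p))) (G.map (homOfLE hp))
    else if hp' : D.c ≤ p then
      eqToHom (D.Wobj_c G hp hp') ≫
        biprod.desc (G.map (homOfLE (D.le_a p))) (G.map (homOfLE hp'))
    else eqToHom (D.Wobj_a G hp hp') ≫ G.map (homOfLE (D.le_a p))
  naturality {p q} h := by
    by_cases hp : D.b ≤ p
    · have hq : D.b ≤ q := hp.trans (leOfHom h)
      simp only [W, Wmap, dif_pos hp, dif_pos hq, eqToHom_trans_assoc, Category.assoc]
      apply whisker_eq
      apply biprod.hom_ext'
      · simp only [biprod.inl_desc_assoc, biprod.inl_desc]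
        rw [map_comp_homOfLE G _ h (D.le_a q)]
      · simp only [biprod.inr_desc_assoc, biprod.inr_desc]
        rw [map_comp_homOfLE G _ h hq]
    · by_cases hp' : D.c ≤ p
      · have hq' : D.c ≤ q := hp'.trans (leOfHom h)
        simp only [W, Wmap, dif_neg hp, dif_pos hp', dif_neg (D.not_b_le_of_c_le hq'),
          dif_pos hq', eqToHom_trans_assoc, Category.assoc]
        apply whisker_eq
        apply biprod.hom_ext'
        · simp only [biprod.inl_desc_assoc, biprod.inl_desc]
          rw [map_comp_homOfLE G _ h (D.le_a q)]
        · simp only [biprod.inr_desc_assoc, biprod.inr_desc]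
          rw [map_comp_homOfLE G _ h hq']
      · by_cases hq : D.b ≤ q
        · simp only [W, Wmap, dif_neg hp, dif_neg hp', dif_pos hq, Category.assoc,
            eqToHom_trans_assoc, eqToHom_refl, Category.id_comp, biprod.inl_desc]
          apply whisker_eq
          rw [map_comp_homOfLE G _ h (D.le_a q)]
        · by_cases hq' : D.c ≤ q
          · simp only [W, Wmap, dif_neg hp, dif_neg hp', dif_neg hq, dif_pos hq',
              Category.assoc, eqToHom_trans_assoc, eqToHom_refl, Category.id_comp,
              biprod.inl_desc]
            apply whisker_eq
            rw [map_comp_homOfLE G _ h (D.le_a q)]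
          · simp only [W, Wmap, dif_neg hp, dif_neg hp', dif_neg hq, dif_neg hq',
              Category.assoc, eqToHom_trans_assoc, eqToHom_refl, Category.id_comp]
            apply whisker_eq
            rw [map_comp_homOfLE G _ h (D.le_a q)]

instance epi_qW_app (p : P) : Epi ((qW D G).app p) := by
  by_cases hp : D.b ≤ p
  · simp only [qW, dif_pos hp]
    have : IsIso (G.map (homOfLE hp)) := isIso_map G hp (D.le_b_of_b_le hp)
    have h1 : biprod.inr ≫ biprod.desc (G.map (homOfLE (D.le_a p)))
        (G.map (homOfLE hp)) = G.map (homOfLE hp) := biprod.inr_desc _ _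
    have : Epi (biprod.desc (G.map (homOfLE (D.le_a p))) (G.map (homOfLE hp))) :=
      epi_of_epi_fac h1
    exact epi_comp' (inferInstanceAs (Epi (eqToHom (D.Wobj_b G hp)))) this
  · by_cases hp' : D.c ≤ p
    · simp only [qW, dif_neg hp, dif_pos hp']
      have : IsIso (G.map (homOfLE hp')) := isIso_map G hp' (D.le_c_of_c_le hp')
      have h1 : biprod.inr ≫ biprod.desc (G.map (homOfLE (D.le_a p)))
          (G.map (homOfLE hp')) = G.map (homOfLE hp') := biprod.inr_desc _ _
      have : Epi (biprod.desc (G.map (homOfLE (D.le_a p))) (G.map (homOfLE hp'))) :=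
        epi_of_epi_fac h1
      exact epi_comp' (inferInstanceAs (Epi (eqToHom (D.Wobj_c G hp hp')))) this
    · simp only [qW, dif_neg hp, dif_neg hp']
      have hpa : p ≤ D.a := by
        rcases D.hall p with h | h | h <;> subst h
        · exact le_rfl
        · exact absurd le_rfl hp
        · exact absurd le_rfl hp'
      have : IsIso (G.map (homOfLE (D.le_a p))) := isIso_map G _ hpa
      exact epi_comp' (inferInstanceAs (Epi (eqToHom (D.Wobj_a G hp hp')))) (IsIso.epi_of_iso _)

instance epi_qW : Epi (qW D G) := NatTrans.epi_of_epi_app _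

lemma W_map_fab : (W D G).map (homOfLE D.hab.le) =
    eqToHom (D.Wobj_a G D.not_b_le_a D.not_c_le_a) ≫ biprod.inl ≫
      eqToHom (D.Wobj_b G le_rfl).symm := by
  simp only [W, Wmap, dif_neg D.not_b_le_a, dif_neg D.not_c_le_a, dif_pos le_rfl]

instance mono_W_map_fab : Mono ((W D G).map (homOfLE D.hab.le)) := by
  rw [W_map_fab]
  exact @mono_comp _ _ _ _ _ _ (inferInstanceAs (Mono (eqToHom (D.Wobj_a G D.not_b_le_a D.not_c_le_a))))
    _ (@mono_comp _ _ _ _ _ _ inferInstance _ (inferInstanceAs (Mono (eqToHom (D.Wobj_b G le_rfl).symm))))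

end W

section AlphaBeta

lemma eq_a_of_le_b_le_c {p : P} (h : p ≤ D.b) (h' : p ≤ D.c) : p = D.a := by
  rcases D.hall p with h'' | h'' | h'' <;> subst h''
  · rfl
  · exact absurd h' D.hbc
  · exact absurd h D.hcb

/-- The functor `G ↦ G(b) ⊞ G(c)`. -/
noncomputable def evbc : (P ⥤ AddCommGrpCat.{u}) ⥤ AddCommGrpCat.{u} where
  obj G := G.obj D.b ⊞ G.obj D.c
  map φ := biprod.map (φ.app D.b) (φ.app D.c)
  map_id G := by
    apply biprod.hom_ext <;> simp
  map_comp φ ψ := by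
    apply biprod.hom_ext <;> simp

instance : (evbc D).Additive where
  map_add := by
    intros
    apply biprod.hom_ext
    · simp [evbc]
      erw [Preadditive.add_comp, biprod.map_fst, biprod.map_fst]
    · simp [evbc]
      erw [Preadditive.add_comp, biprod.map_snd, biprod.map_snd]

/-- The natural transformation `G(a) ⟶ G(b) ⊞ G(c)`. -/
noncomputable def alphaT : (evaluation P AddCommGrpCat.{u}).obj D.a ⟶ evbc D where
  app G := biprod.lift (G.map (homOfLE D.hab.le)) (-(G.map (homOfLE D.hac.le)))
  naturality {G H} φ := by
    apply biprod.hom_ext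
    · simp [evbc, φ.naturality]
    · simp [evbc, φ.naturality]

/-- The natural transformation `G(b) ⊞ G(c) ⟶ colim G`. -/
noncomputable def betaT : evbc D ⟶ (colim : (P ⥤ AddCommGrpCat.{u}) ⥤ AddCommGrpCat.{u}) where
  app G := biprod.desc (colimit.ι G D.b) (colimit.ι G D.c)
  naturality {G H} φ := by
    apply biprod.hom_ext'
    · simp [evbc]
    · simp [evbc]

lemma alpha_beta_zero (G : P ⥤ AddCommGrpCat.{u}) :
    (alphaT D).app G ≫ (betaT D).app G = 0 := by
  show biprod.lift (G.map (homOfLE D.hab.le)) (-(G.map (homOfLE D.hac.le))) ≫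
    biprod.desc (colimit.ι G D.b) (colimit.ι G D.c) = 0
  simp only [alphaT, betaT, biprod.lift_desc, Preadditive.neg_comp,
    colimit.w G (homOfLE D.hab.le), colimit.w G (homOfLE D.hac.le)]
  exact add_neg_cancel _

lemma epi_beta_app (G : P ⥤ AddCommGrpCat.{u}) : Epi ((betaT D).app G) := by
  constructor
  intro Z u v huv
  apply colimit.hom_ext
  intro j
  by_cases hj : j ≤ D.b
  · rw [← colimit.w G (homOfLE hj)]
    have hb : colimit.ι G D.b = (biprod.inl : G.obj D.b ⟶ (evbc D).obj G) ≫ (betaT D).app G :=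
      (biprod.inl_desc _ _).symm
    rw [hb]
    simp only [Category.assoc, huv]
    erw [Category.assoc, Category.assoc, huv]
    rfl
  · rw [← colimit.w G (homOfLE (D.le_c_of_not_le_b hj))]
    have hc : colimit.ι G D.c = (biprod.inr : G.obj D.c ⟶ (evbc D).obj G) ≫ (betaT D).app G :=
      (biprod.inr_desc _ _).symm
    rw [hc]
    simp only [Category.assoc, huv]
    erw [Category.assoc, Category.assoc, huv]
    rfl

section Cofork
variable (G : P ⥤ AddCommGrpCat.{u}) {T : AddCommGrpCat.{u}}
  (ψ : (evbc D).obj G ⟶ T)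

lemma key_rel (hψ : (alphaT D).app G ≫ ψ = 0) : G.map (homOfLE D.hab.le) ≫ biprod.inl ≫ ψ =
    G.map (homOfLE D.hac.le) ≫ biprod.inr ≫ ψ := by
  have h := hψ
  simp only [alphaT] at h
  erw [biprod.lift_eq, Preadditive.add_comp, Preadditive.neg_comp, Preadditive.neg_comp,
    Category.assoc, Category.assoc] at h
  rw [← sub_eq_zero]
  exact (sub_eq_add_neg _ _).trans h

open Classical in
/-- the cocone on `G` induced by a map killing `alphaT` -/
noncomputable def myCocone (hψ : (alphaT D).app G ≫ ψ = 0) : Cocone G where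
  pt := T
  ι :=
    { app := fun p => if hp : p ≤ D.b then G.map (homOfLE hp) ≫ biprod.inl ≫ ψ
        else G.map (homOfLE (D.le_c_of_not_le_b hp)) ≫ biprod.inr ≫ ψ
      naturality := by
        intro p q h
        dsimp
        rw [Category.comp_id]
        by_cases hq : q ≤ D.b
        · have hp : p ≤ D.b := (leOfHom h).trans hq
          rw [dif_pos hp, dif_pos hq, ← Category.assoc, map_homOfLE_comp G h hq hp]
        · by_cases hp : p ≤ D.b
          · -- p ≤ b, q ≤ c : then p = a
            have hpc : p ≤ D.c := (leOfHom h).trans (D.le_c_of_not_le_b hq)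
            have hpa : p = D.a := D.eq_a_of_le_b_le_c hp hpc
            subst hpa
            rw [dif_pos hp, dif_neg hq, ← Category.assoc,
              map_homOfLE_comp G h (D.le_c_of_not_le_b hq) hpc]
            have h1 : G.map (homOfLE hpc) ≫ biprod.inr ≫ ψ =
                G.map (homOfLE D.hac.le) ≫ biprod.inr ≫ ψ := rfl
            have h2 : G.map (homOfLE hp) ≫ biprod.inl ≫ ψ =
                G.map (homOfLE D.hab.le) ≫ biprod.inl ≫ ψ := rfl
            rw [h1, h2, key_rel D G ψ hψ]
          · rw [dif_neg hp, dif_neg hq, ← Category.assoc,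
              map_homOfLE_comp G h (D.le_c_of_not_le_b hq) (D.le_c_of_not_le_b hp)] }

/-- `betaT` is a cokernel of `alphaT`. -/
noncomputable def coforkIsColimit :
    IsColimit (CokernelCofork.ofπ ((betaT D).app G) (alpha_beta_zero D G)) := by
  apply CokernelCofork.IsColimit.ofπ
  case desc => exact fun {T'} ψ hψ => colimit.desc G (myCocone D G ψ hψ)
  case fac =>
    intro T' ψ hψ
    apply biprod.hom_ext'
    · have hb : biprod.inl ≫ (betaT D).app G = colimit.ι G D.b := by simp [betaT]
      erw [← Category.assoc, hb, colimit.ι_desc]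
      simp only [myCocone, dif_pos (le_refl D.b)]
      rw [show (homOfLE (le_refl D.b)) = 𝟙 D.b from Subsingleton.elim _ _, G.map_id,
        Category.id_comp]
    · have hc : biprod.inr ≫ (betaT D).app G = colimit.ι G D.c := by simp [betaT]
      erw [← Category.assoc, hc, colimit.ι_desc]
      simp only [myCocone, dif_neg D.hcb]
      rw [show (homOfLE (D.le_c_of_not_le_b D.hcb)) = 𝟙 D.c from Subsingleton.elim _ _,
        G.map_id, Category.id_comp]
  case uniq =>
    intro T' ψ hψ m hm
    apply colimit.hom_ext
    intro j
    erw [colimit.ι_desc]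
    by_cases hj : j ≤ D.b
    · simp only [myCocone, dif_pos hj]
      rw [← colimit.w G (homOfLE hj), Category.assoc]
      congr 1
      have hb : colimit.ι G D.b = (biprod.inl : G.obj D.b ⟶ (evbc D).obj G) ≫
        (betaT D).app G := (biprod.inl_desc _ _).symm
      erw [hb, Category.assoc, hm]
    · simp only [myCocone, dif_neg hj]
      rw [← colimit.w G (homOfLE (D.le_c_of_not_le_b hj)), Category.assoc]
      congr 1
      have hc : colimit.ι G D.c = (biprod.inr : G.obj D.c ⟶ (evbc D).obj G) ≫
        (betaT D).app G := (biprod.inr_desc _ _).symm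
      erw [hc, Category.assoc, hm]

end Cofork

lemma exact_SG (G : P ⥤ AddCommGrpCat.{u}) :
    (ShortComplex.mk ((alphaT D).app G) ((betaT D).app G) (alpha_beta_zero D G)).Exact :=
  ShortComplex.exact_of_g_is_cokernel _ (coforkIsColimit D G)

lemma mono_alpha_of_projective (G : P ⥤ AddCommGrpCat.{u}) [Projective G] :
    Mono ((alphaT D).app G) := by
  have hs : Projective.factorThru (𝟙 G) (qW D G) ≫ qW D G = 𝟙 G :=
    Projective.factorThru_comp _ _
  set s := Projective.factorThru (𝟙 G) (qW D G) with hs_def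
  have hsa : s.app D.a ≫ (qW D G).app D.a = 𝟙 _ := by
    rw [← NatTrans.comp_app, hs]; rfl
  have hmono_sa : Mono (s.app D.a) := mono_of_mono_fac hsa
  have hmW : Mono ((alphaT D).app (W D G)) := by
    have h1 : (alphaT D).app (W D G) ≫ biprod.fst = (W D G).map (homOfLE D.hab.le) := by
      simp [alphaT]
      exact biprod.lift_fst _ _
    exact mono_of_mono_fac h1
  have sq := (alphaT D).naturality s
  simp only [evaluation_obj_map] at sq
  have : Mono (s.app D.a ≫ (alphaT D).app (W D G)) := mono_comp _ _
  rw [sq] at this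
  exact mono_of_mono ((alphaT D).app G) ((evbc D).map s)

end AlphaBeta

section Complexes

open HomologicalComplex

instance (p : P) : PreservesFiniteLimits ((evaluation P AddCommGrpCat.{u}).obj p) :=
  ⟨fun _ _ _ => inferInstance⟩

instance (p : P) : PreservesFiniteColimits ((evaluation P AddCommGrpCat.{u}).obj p) :=
  ⟨fun _ _ _ => inferInstance⟩

/-- the natural transformation `G(a) ⟶ G(b)` -/
noncomputable def fabT : (evaluation P AddCommGrpCat.{u}).obj D.a ⟶
    (evaluation P AddCommGrpCat.{u}).obj D.b where
  app G := G.map (homOfLE D.hab.le)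
  naturality {G H} φ := by
    simpa using (φ.naturality (homOfLE D.hab.le)).symm

/-- projection onto the `b`-factor -/
noncomputable def pbT : evbc D ⟶ (evaluation P AddCommGrpCat.{u}).obj D.b where
  app G := biprod.fst
  naturality {G H} φ := by simp [evbc]

/-- projection onto the `c`-factor -/
noncomputable def pcT : evbc D ⟶ (evaluation P AddCommGrpCat.{u}).obj D.c where
  app G := biprod.snd
  naturality {G H} φ := by simp [evbc]

/-- inclusion of the `b`-factor -/
noncomputable def ibT : (evaluation P AddCommGrpCat.{u}).obj D.b ⟶ evbc D where
  app G := biprod.inl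
  naturality {G H} φ := by simp [evbc]

/-- inclusion of the `c`-factor -/
noncomputable def icT : (evaluation P AddCommGrpCat.{u}).obj D.c ⟶ evbc D where
  app G := biprod.inr
  naturality {G H} φ := by simp [evbc]

lemma alphaT_pbT : alphaT D ≫ pbT D = fabT D := by
  ext G
  simp [alphaT, pbT, fabT]
  erw [biprod.lift_fst]

variable (F : P ⥤ AddCommGrpCat.{u})

section Mapped
variable (Φ : (P ⥤ AddCommGrpCat.{u}) ⥤ AddCommGrpCat.{u}) [Φ.Additive] [Φ.PreservesHomology]
  (R : ProjectiveResolution F)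

lemma isZero_mapped_homology (i : ℕ) (hi : i ≠ 0) :
    IsZero (((Φ.mapHomologicalComplex (ComplexShape.down ℕ)).obj R.complex).homology i) := by
  have hq : QuasiIso ((Φ.mapHomologicalComplex (ComplexShape.down ℕ)).map R.π) :=
    inferInstance
  have hiso : IsIso (homologyMap
      ((Φ.mapHomologicalComplex (ComplexShape.down ℕ)).map R.π) i) := by
    rw [← quasiIsoAt_iff_isIso_homologyMap]
    infer_instance
  refine IsZero.of_iso ?_
    (asIso (homologyMap ((Φ.mapHomologicalComplex (ComplexShape.down ℕ)).map R.π) i) ≪≫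
      (homologyFunctor AddCommGrpCat.{u} (ComplexShape.down ℕ) i).mapIso
        ((singleMapHomologicalComplex Φ (ComplexShape.down ℕ) 0).app F))
  exact isZero_single_obj_homology (ComplexShape.down ℕ) 0 (Φ.obj F) i hi

end Mapped

lemma singles_square {Φ Ψ : (P ⥤ AddCommGrpCat.{u}) ⥤ AddCommGrpCat.{u}}
    [Φ.Additive] [Ψ.Additive] (τ : Φ ⟶ Ψ) :
    (NatTrans.mapHomologicalComplex τ (ComplexShape.down ℕ)).app
        ((HomologicalComplex.single _ _ 0).obj F) ≫
      ((singleMapHomologicalComplex Ψ (ComplexShape.down ℕ) 0).hom.app F) =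
    ((singleMapHomologicalComplex Φ (ComplexShape.down ℕ) 0).hom.app F) ≫
      (HomologicalComplex.single _ _ 0).map (τ.app F) := by
  apply HomologicalComplex.hom_ext
  intro n
  by_cases hn : n = 0
  · subst hn
    simp only [HomologicalComplex.comp_f, NatTrans.mapHomologicalComplex_app_f,
      singleMapHomologicalComplex_hom_app_self, single_map_f_self]
    erw [← Category.assoc, ← τ.naturality]
    simp
    erw [Category.id_comp]
  · apply (isZero_single_obj_X (ComplexShape.down ℕ) 0 (Ψ.obj F) n hn).eq_of_tgt

lemma mono_H0_single_map {M N : AddCommGrpCat.{u}} (g : M ⟶ N) (hg : Mono g) :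
    Mono (homologyMap
      ((HomologicalComplex.single AddCommGrpCat.{u} (ComplexShape.down ℕ) 0).map g) 0) := by
  have sq := singleObjHomologySelfIso_hom_naturality (C := AddCommGrpCat.{u})
    (c := ComplexShape.down ℕ) (j := 0) (f := g)
  have hm : Mono ((singleObjHomologySelfIso (ComplexShape.down ℕ) 0 M).hom ≫ g) :=
    mono_comp _ _
  rw [← sq] at hm
  exact mono_of_mono _ ((singleObjHomologySelfIso (ComplexShape.down ℕ) 0 N).hom)

end Complexes


section Main

open HomologicalComplex

variable (F : P ⥤ AddCommGrpCat.{u}) [HasProjectiveResolutions (P ⥤ AddCommGrpCat.{u})]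

theorem main_isZero (hm : Mono (F.map (homOfLE D.hab.le))) (i : ℕ) (hi : 1 ≤ i) :
    IsZero (((colim : (P ⥤ AddCommGrpCat.{u}) ⥤ AddCommGrpCat.{u}).leftDerived i).obj F) := by
  obtain ⟨j, rfl⟩ : ∃ j, i = j + 1 := ⟨i - 1, by omega⟩
  set cs := ComplexShape.down ℕ with hcs
  let R : ProjectiveResolution F := projectiveResolution F
  -- the short exact sequence of complexes
  let αC : (((evaluation P AddCommGrpCat.{u}).obj D.a).mapHomologicalComplex cs).obj R.complex ⟶
      ((evbc D).mapHomologicalComplex cs).obj R.complex :=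
    (NatTrans.mapHomologicalComplex (alphaT D) cs).app R.complex
  let βC : ((evbc D).mapHomologicalComplex cs).obj R.complex ⟶
      (((colim : (P ⥤ AddCommGrpCat.{u}) ⥤ AddCommGrpCat.{u})).mapHomologicalComplex cs).obj
        R.complex :=
    (NatTrans.mapHomologicalComplex (betaT D) cs).app R.complex
  have hzero : αC ≫ βC = 0 := by
    apply HomologicalComplex.hom_ext
    intro n
    simp only [HomologicalComplex.comp_f, NatTrans.mapHomologicalComplex_app_f,
      HomologicalComplex.zero_f, αC, βC]
    exact alpha_beta_zero D (R.complex.X n)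
  set SC : ShortComplex (HomologicalComplex AddCommGrpCat.{u} cs) :=
    ShortComplex.mk αC βC hzero with hSC
  have hSE : SC.ShortExact := by
    apply HomologicalComplex.shortExact_of_degreewise_shortExact
    intro n
    exact
      { exact := exact_SG D (R.complex.X n)
        mono_f := mono_alpha_of_projective D (R.complex.X n)
        epi_g := epi_beta_app D (R.complex.X n) }
  -- vanishing of the homologies of X₁ and of the evaluated complexes
  have hAa : ∀ k : ℕ, k ≠ 0 → IsZero (SC.X₁.homology k) := fun k hk =>
    isZero_mapped_homology F ((evaluation P AddCommGrpCat.{u}).obj D.a) R k hk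
  have hAb : ∀ k : ℕ, k ≠ 0 →
      IsZero (((((evaluation P AddCommGrpCat.{u}).obj D.b).mapHomologicalComplex cs).obj
        R.complex).homology k) := fun k hk =>
    isZero_mapped_homology F ((evaluation P AddCommGrpCat.{u}).obj D.b) R k hk
  have hAc : ∀ k : ℕ, k ≠ 0 →
      IsZero (((((evaluation P AddCommGrpCat.{u}).obj D.c).mapHomologicalComplex cs).obj
        R.complex).homology k) := fun k hk =>
    isZero_mapped_homology F ((evaluation P AddCommGrpCat.{u}).obj D.c) R k hk
  -- vanishing of homology of X₂ via the biproduct decomposition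
  let pbC := (NatTrans.mapHomologicalComplex (pbT D) cs).app R.complex
  let pcC := (NatTrans.mapHomologicalComplex (pcT D) cs).app R.complex
  let ibC := (NatTrans.mapHomologicalComplex (ibT D) cs).app R.complex
  let icC := (NatTrans.mapHomologicalComplex (icT D) cs).app R.complex
  have hB : ∀ k : ℕ, k ≠ 0 → IsZero (SC.X₂.homology k) := by
    intro k hk
    rw [IsZero.iff_id_eq_zero]
    have hid : 𝟙 SC.X₂ = pbC ≫ ibC + pcC ≫ icC := by
      apply HomologicalComplex.hom_ext
      intro n
      simp only [HomologicalComplex.id_f, HomologicalComplex.add_f_apply,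
        HomologicalComplex.comp_f, NatTrans.mapHomologicalComplex_app_f, pbC, pcC, ibC, icC,
        pbT, pcT, ibT, icT]
      exact biprod.total.symm
    have e1 : 𝟙 (SC.X₂.homology k) =
        (homologyFunctor AddCommGrpCat.{u} cs k).map (𝟙 SC.X₂) := by simp
    rw [e1, hid, Functor.map_add, Functor.map_comp, Functor.map_comp,
      (hAb k hk).eq_zero_of_tgt ((homologyFunctor AddCommGrpCat.{u} cs k).map pbC),
      (hAc k hk).eq_zero_of_tgt ((homologyFunctor AddCommGrpCat.{u} cs k).map pcC)]
    erw [zero_comp, zero_comp, add_zero]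
    rfl
  -- Mono on H₀ of SC.f
  have hmono0 : Mono (homologyMap SC.f 0) := by
    let fabC := (NatTrans.mapHomologicalComplex (fabT D) cs).app R.complex
    have hcomp : SC.f ≫ pbC = fabC := by
      show (NatTrans.mapHomologicalComplex (alphaT D) cs).app R.complex ≫
        (NatTrans.mapHomologicalComplex (pbT D) cs).app R.complex = _
      rw [← NatTrans.comp_app, ← NatTrans.mapHomologicalComplex_comp, alphaT_pbT]
    -- mono on the single side
    have hmsingle : Mono (homologyMap ((NatTrans.mapHomologicalComplex (fabT D) cs).app
        ((HomologicalComplex.single (P ⥤ AddCommGrpCat.{u}) cs 0).obj F)) 0) := by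
      have hsq := singles_square F (fabT D)
      have heq : (NatTrans.mapHomologicalComplex (fabT D) cs).app
          ((HomologicalComplex.single (P ⥤ AddCommGrpCat.{u}) cs 0).obj F) =
          (singleMapHomologicalComplex ((evaluation P AddCommGrpCat.{u}).obj D.a) cs 0).hom.app F ≫
            (HomologicalComplex.single AddCommGrpCat.{u} cs 0).map ((fabT D).app F) ≫
            ((singleMapHomologicalComplex ((evaluation P AddCommGrpCat.{u}).obj D.b) cs
              0).app F).inv := by
        rw [← Category.assoc, Iso.eq_comp_inv]
        exact hsq
      rw [heq, homologyMap_comp, homologyMap_comp]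
      have m2 : Mono (homologyMap ((HomologicalComplex.single AddCommGrpCat.{u} cs 0).map
          ((fabT D).app F)) 0) := mono_H0_single_map ((fabT D).app F) hm
      have m1 : IsIso (homologyMap
          ((singleMapHomologicalComplex ((evaluation P AddCommGrpCat.{u}).obj D.a) cs
            0).hom.app F) 0) := by
        change IsIso ((homologyFunctor AddCommGrpCat.{u} cs 0).map _)
        infer_instance
      have m3 : IsIso (homologyMap
          (((singleMapHomologicalComplex ((evaluation P AddCommGrpCat.{u}).obj D.b) cs
            0).app F).inv) 0) := by
        change IsIso ((homologyFunctor AddCommGrpCat.{u} cs 0).map _)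
        infer_instance
      exact mono_comp _ _
    -- transfer along the quasi-isomorphisms
    have q1 : IsIso (homologyMap
        ((((evaluation P AddCommGrpCat.{u}).obj D.a).mapHomologicalComplex cs).map R.π) 0) := by
      rw [← quasiIsoAt_iff_isIso_homologyMap]
      infer_instance
    have q2 : IsIso (homologyMap
        ((((evaluation P AddCommGrpCat.{u}).obj D.b).mapHomologicalComplex cs).map R.π) 0) := by
      rw [← quasiIsoAt_iff_isIso_homologyMap]
      infer_instance
    have sq2 := NatTrans.mapHomologicalComplex_naturality (α := fabT D) (c := cs) (f := R.π)
    have sq2h := congrArg (fun z => homologyMap z 0) sq2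
    simp only [homologyMap_comp] at sq2h
    -- sq2h : H(eva π) ≫ H(fab @ single) = H(fabC) ≫ H(evb π)
    have hmono_fabC : Mono (homologyMap fabC 0) := by
      have : Mono (homologyMap
          ((((evaluation P AddCommGrpCat.{u}).obj D.a).mapHomologicalComplex cs).map R.π) 0 ≫
          homologyMap ((NatTrans.mapHomologicalComplex (fabT D) cs).app
            ((HomologicalComplex.single (P ⥤ AddCommGrpCat.{u}) cs 0).obj F)) 0) :=
        mono_comp _ _
      rw [sq2h] at this
      exact mono_of_mono (homologyMap fabC 0) (homologyMap
        ((((evaluation P AddCommGrpCat.{u}).obj D.b).mapHomologicalComplex cs).map R.π) 0)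
    have : Mono (homologyMap SC.f 0 ≫ homologyMap pbC 0) := by
      rw [← homologyMap_comp, hcomp]
      exact hmono_fabC
    exact mono_of_mono (homologyMap SC.f 0) (homologyMap pbC 0)
  -- conclude using the homology long exact sequence
  have rel : cs.Rel (j + 1) j := by simp [hcs]
  have h3 := hSE.homology_exact₃ (j + 1) j rel
  have hmono_δ : Mono (hSE.δ (j + 1) j rel) := by
    apply h3.mono_g
    exact (hB (j + 1) (by omega)).eq_zero_of_src _
  have hδ0 : hSE.δ (j + 1) j rel = 0 := by
    cases j with
    | zero =>
      have hc := hSE.δ_comp (0 + 1) 0 rel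
      rw [← cancel_mono (homologyMap SC.f 0)]
      rw [hc, zero_comp]
    | succ j' =>
      exact (hAa (j' + 1) (by omega)).eq_zero_of_tgt _
  have hzero3 : IsZero (SC.X₃.homology (j + 1)) := by
    rw [IsZero.iff_id_eq_zero, ← cancel_mono (hSE.δ (j + 1) j rel), hδ0, comp_zero, zero_comp]
  exact IsZero.of_iso hzero3
    (R.isoLeftDerivedObj (colim : (P ⥤ AddCommGrpCat.{u}) ⥤ AddCommGrpCat.{u}) (j + 1))

end Main

end SpanData

/-- Let `P` be the pushout category `b ⟵ a ⟶ c` (a poset with a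
unique minimal element `a` and two incomparable maximal elements `b, c`) and let
`F : P ⥤ Ab` be a functor such that `F(a→b)` and `F(a→c)` are monomorphisms.  Then
the left derived colimits `colimᵢ F` vanish for all `i ≥ 1` (in particular
`colim₁ F = 0`). -/
theorem pushout_monic_colim_acyclic
    {P : Type} [PartialOrder P]
    [HasProjectiveResolutions (P ⥤ AddCommGrpCat)]
    (a b c : P)
    (hab : a < b) (hac : a < c)
    (hbc : ¬ b ≤ c) (hcb : ¬ c ≤ b)
    (hall : ∀ p : P, p = a ∨ p = b ∨ p = c)
    (F : P ⥤ AddCommGrpCat)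
    (hmono₁ : Function.Injective (F.map (homOfLE hab.le)))
    (hmono₂ : Function.Injective (F.map (homOfLE hac.le))) :
    ∀ i : ℕ, 1 ≤ i →
      IsZero (((colim : (P ⥤ AddCommGrpCat) ⥤ AddCommGrpCat).leftDerived i).obj F) := by
  intro i hi
  have hm : Mono (F.map (homOfLE hab.le)) :=
    ConcreteCategory.mono_of_injective _ hmono₁
  exact SpanData.main_isZero ⟨a, b, c, hab, hac, hbc, hcb, hall⟩ F hm i hi
end

section
/- Let P be a graded poset and F : P → Ab an injective object of Ab^P. Then for every object i₀, the subgroup ker(i₀) = ∩ over nonidentity α : i₀ → i of ker F(α) is an injective abelian group (i.e., divisible). -/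
open CategoryTheory

universe u

variable {P : Type} [PartialOrder P]

/-- `ker F i₀` is the intersection of the kernels of `F.map α` over all nonidentity
morphisms `α : i₀ ⟶ i` (equal to all of `F.obj i₀` if there are none). -/
def kerSubgroup (F : P ⥤ AddCommGrpCat) (i₀ : P) : AddSubgroup (F.obj i₀) :=
  ⨅ i : {i : P // i₀ < i}, (F.map (homOfLE i.2.le)).hom.ker

def Ssub (i₀ j : P) : AddSubgroup ℤ where
  carrier := {m | j ≠ i₀ → m = 0}
  zero_mem' := fun _ => rfl
  add_mem' := fun ha hb h => by rw [ha h, hb h, add_zero]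
  neg_mem' := fun ha h => by rw [ha h, neg_zero]

open Classical in
noncomputable def skyMap (i₀ : P) {j k : P} (_ : j ⟶ k) :
    ULift.{u} (Ssub i₀ j) →+ ULift.{u} (Ssub i₀ k) where
  toFun m := ⟨⟨if k = i₀ then (m.down : ℤ) else 0, by intro hk; simp [hk]⟩⟩
  map_zero' := by ext; simp
  map_add' a b := by ext; split_ifs <;> simp

open Classical in
@[reducible] noncomputable def sky (i₀ : P) : P ⥤ AddCommGrpCat.{u} where
  obj j := AddCommGrpCat.of (ULift (Ssub i₀ j))
  map f := AddCommGrpCat.ofHom (skyMap i₀ f)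
  map_id j := by
    ext m : 2
    refine ULift.ext _ _ (Subtype.ext ?_)
    by_cases h : j = i₀
    · simp [skyMap, h]
    · simp [skyMap, h, m.down.2 h]
  map_comp {j k l} f g := by
    ext m : 2
    refine ULift.ext _ _ (Subtype.ext ?_)
    simp only [AddCommGrpCat.ofHom, comp_apply]
    by_cases hl : l = i₀
    · by_cases hk : k = i₀
      · simp [skyMap, hl, hk]
      · have hj : j ≠ i₀ := by
          intro hj
          exact hk (le_antisymm (le_of_le_of_eq (leOfHom g) hl)
            ((le_of_eq hj.symm).trans (leOfHom f)))
        simp [skyMap, hl, hk, m.down.2 hj]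
    · simp [skyMap, hl]

noncomputable def skyOne (i₀ : P) : (sky.{u} i₀).obj i₀ :=
  ⟨⟨1, fun h => absurd rfl h⟩⟩

theorem ker_divisible (F : P ⥤ AddCommGrpCat.{u}) (hF : Injective F) (i₀ : P)
    (x : F.obj i₀) (hx : x ∈ kerSubgroup F i₀) (n : ℤ) (hn : n ≠ 0) :
    ∃ y ∈ kerSubgroup F i₀, n • y = x := by
  classical
  have hker : ∀ (i : P) (hi : i₀ < i), F.map (homOfLE hi.le) x = 0 :=
    fun i hi => AddSubgroup.mem_iInf.mp hx ⟨i, hi⟩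
  set ν : sky.{u} (P := P) i₀ ⟶ sky i₀ := n • 𝟙 (sky i₀) with hν
  haveI hmonoapp : ∀ j : P, Mono (ν.app j) := by
    intro j
    rw [AddCommGrpCat.mono_iff_injective]
    intro a b hab
    have hab' : n • a = n • b := by simpa [hν] using hab
    have h2 : n • (a.down : ℤ) = n • (b.down : ℤ) := by
      exact congrArg (fun z : ULift.{u} (Ssub i₀ j) => ((z.down : ℤ))) hab'
    exact ULift.ext _ _ (Subtype.ext (smul_right_injective ℤ hn h2))
  haveI hmono : Mono ν := NatTrans.mono_of_mono_app ν
  set g : sky.{u} (P := P) i₀ ⟶ F :=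
    { app := fun j => AddCommGrpCat.ofHom
        { toFun := fun m =>
            if h : j = i₀ then ((m.down : ℤ)) • (F.map (eqToHom h.symm)) x else 0
          map_zero' := by split_ifs <;> simp
          map_add' := fun a b => by
            split_ifs with h
            · simp [add_smul]
            · simp }
      naturality := fun j k f => by
        ext m
        show (if h : k = i₀ then ((((sky.{u} i₀).map f m).down : Ssub i₀ k) : ℤ) •
              (F.map (eqToHom h.symm)) x else 0) =
            F.map f (if h : j = i₀ then ((m.down : ℤ)) • (F.map (eqToHom h.symm)) x else 0)
        by_cases hk : k = i₀
        · by_cases hj : j = i₀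
          · have hs : ((((sky.{u} i₀).map f m).down : Ssub i₀ k) : ℤ) = (m.down : ℤ) := by
              simp [sky, skyMap, hk]
            rw [dif_pos hk, dif_pos hj, hs, map_zsmul, ← comp_apply, ← F.map_comp,
              Subsingleton.elim (eqToHom hj.symm ≫ f) (eqToHom hk.symm)]
          · have h0 : ((m.down : Ssub i₀ j) : ℤ) = 0 := m.down.2 hj
            rw [dif_pos hk, dif_neg hj, map_zero]
            have hs : ((((sky.{u} i₀).map f m).down : Ssub i₀ k) : ℤ) = 0 := by
              simp [sky, skyMap, hk, h0]
            rw [hs, zero_smul]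
        · by_cases hj : j = i₀
          · subst hj
            have hlt : j < k := lt_of_le_of_ne (leOfHom f) (Ne.symm hk)
            rw [dif_neg hk, dif_pos rfl, map_zsmul, ← comp_apply, ← F.map_comp,
              Subsingleton.elim (eqToHom (rfl : j = j).symm ≫ f) (homOfLE hlt.le),
              hker k hlt, smul_zero]
          · rw [dif_neg hk, dif_neg hj, map_zero] } with hg
  haveI := hF
  set h : sky.{u} (P := P) i₀ ⟶ F := Injective.factorThru g ν with hhdef
  have hh : ν ≫ h = g := Injective.comp_factorThru g ν
  refine ⟨h.app i₀ (skyOne i₀), ?_, ?_⟩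
  · rw [kerSubgroup, AddSubgroup.mem_iInf]
    intro ⟨i, hi⟩
    rw [AddMonoidHom.mem_ker, ← comp_apply, ← h.naturality (homOfLE hi.le)]
    have h0 : (sky.{u} i₀).map (homOfLE hi.le) (skyOne i₀) = 0 := by
      refine ULift.ext _ _ (Subtype.ext ?_)
      simp [sky, skyMap, skyOne, hi.ne']
    rw [comp_apply, h0]
    exact (h.app i).hom.map_zero
  · have hx1 : h.app i₀ (ν.app i₀ (skyOne i₀)) = g.app i₀ (skyOne i₀) := by
      rw [← comp_apply, ← NatTrans.comp_app, hh]
    have hν1 : ν.app i₀ (skyOne i₀) = n • skyOne i₀ := by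
      rw [hν, NatTrans.app_zsmul]
      rfl
    rw [hν1, map_zsmul] at hx1
    rw [hx1]
    show (if h : i₀ = i₀ then (((skyOne.{u} (P := P) i₀).down : ℤ)) •
        (F.map (eqToHom h.symm)) x else 0) = x
    rw [dif_pos rfl]
    show (1 : ℤ) • (F.map (eqToHom rfl)) x = x
    simp

/-- Let `P` be a graded poset and `F : P ⥤ Ab` an injective object
of the functor category `Ab^P`.  Then for every object `i₀`, the subgroup
`ker(i₀) = ∩_{α : i₀ → i, α ≠ id} ker F(α)` is an injective abelian group
(equivalently, a divisible group), i.e. an injective `ℤ`-module. -/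
theorem ker_injective_of_injective
    (deg : P → ℤ) (hmono : Monotone deg)
    (hcov : ∀ ⦃a b : P⦄, a ⋖ b → deg b = deg a + 1)
    (F : P ⥤ AddCommGrpCat) (hF : Injective F) (i₀ : P) :
    Module.Injective ℤ ↥(kerSubgroup F i₀) := by
  have div : ∀ (x : ↥(kerSubgroup F i₀)) (n : ℤ), n ≠ 0 → ∃ y, n • y = x := by
    intro x n hn
    obtain ⟨y, hy, hny⟩ := ker_divisible F hF i₀ x.1 x.2 n hn
    exact ⟨⟨y, hy⟩, Subtype.ext hny⟩
  haveI : DivisibleBy ↥(kerSubgroup F i₀) ℤ :=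
    { div := fun a n => if h : n = 0 then 0 else (div a n h).choose
      div_zero := fun a => by simp
      div_cancel := fun {n} a h => by
        simpa [h] using (div a n h).choose_spec }
  exact (Module.Baer.of_divisible _).injective
end
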